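/- Let n ≥ 3, and fix k with 1 ≤ k ≤ n−1. Let B_k be the set of partial strong endomorphisms α of the star graph S_n such that {0,1,...,k} ⊆ im(α), 0 ∈ dom(α), 0α = 0, and |im(α)| ≥ 3. Let C_k be the set of partial endomorphisms α of S_n that are not partial strong endomorphisms and satisfy k = min({1,...,n−1} \ im(α)). Then |B_k| = |C_k|. -/

import Mathlib

variable {V : Type*}

/-- Partial transformations of `V`. -/
abbrev PTrans (V : Type*) := V → Option V

/-- Monoid of partial transformations under (left-to-right) composition. -/
instance : Monoid (PTrans V) where
  mul f g := fun v => (f v).bind g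
  one := fun v => some v
  mul_assoc f g h := by
    funext v
    show ((f v).bind g).bind h = (f v).bind (fun x => (g x).bind h)
    cases f v <;> simp
  one_mul f := by funext v; rfl
  mul_one f := by
    funext v
    show (f v).bind (fun x => some x) = f v
    cases f v <;> simp

/-- Domain of a partial transformation. -/
def pdom (α : PTrans V) : Set V := {u | α u ≠ none}

/-- Image of a partial transformation. -/
def pim (α : PTrans V) : Set V := {v | ∃ u, α u = some v}

def IsPEnd (G : SimpleGraph V) (α : PTrans V) : Prop :=
  ∀ u v u' v', α u = some u' → α v = some v' → G.Adj u v → G.Adj u' v'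

def IsPwEnd (G : SimpleGraph V) (α : PTrans V) : Prop :=
  ∀ u v u' v', α u = some u' → α v = some v' → G.Adj u v → u' ≠ v' → G.Adj u' v'

def IsPsEnd (G : SimpleGraph V) (α : PTrans V) : Prop :=
  ∀ u v u' v', α u = some u' → α v = some v' → (G.Adj u v ↔ G.Adj u' v')

def IsPswEnd (G : SimpleGraph V) (α : PTrans V) : Prop :=
  ∀ u v u' v', α u = some u' → α v = some v' → ((G.Adj u v ∧ u' ≠ v') ↔ G.Adj u' v')

/-- Injectivity of a partial transformation. -/
def PInjective (α : PTrans V) : Prop :=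
  ∀ u v w, α u = some w → α v = some w → u = v

open Classical in
/-- The inverse of a partial (injective) transformation. -/
noncomputable def pinv (α : PTrans V) : PTrans V :=
  fun v => if h : ∃ u, α u = some v then some h.choose else none

/-- Partial automorphism: injective, and both it and its inverse are
partial endomorphisms. -/
def IsPAut (G : SimpleGraph V) (α : PTrans V) : Prop :=
  PInjective α ∧ IsPEnd G α ∧ IsPEnd G (pinv α)

/-- The star graph on vertices `{0,1,...,n-1}` with center `0`. -/
def starGraph (n : ℕ) : SimpleGraph (Fin n) :=
  SimpleGraph.fromRel (fun u _ => (u : ℕ) = 0)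

lemma star_adj {n : ℕ} (z : Fin n) (hz : (z : ℕ) = 0) (u v : Fin n) :
    (starGraph n).Adj u v ↔ u ≠ v ∧ (u = z ∨ v = z) := by
  simp only [starGraph, SimpleGraph.fromRel_adj]
  constructor
  · rintro ⟨h1, h2⟩
    exact ⟨h1, h2.imp (fun h => Fin.ext (h.trans hz.symm)) (fun h => Fin.ext (h.trans hz.symm))⟩
  · rintro ⟨h1, h2⟩
    exact ⟨h1, h2.imp (fun h => by rw [h]; exact hz) (fun h => by rw [h]; exact hz)⟩

lemma strong_of_center {n : ℕ} (z : Fin n) (hz : (z : ℕ) = 0) (α : PTrans (Fin n))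
    (h0 : α z = some z)
    (hne : ∀ i w, i ≠ z → α i = some w → w ≠ z) :
    IsPsEnd (starGraph n) α := by
  intro u v u' v' hu hv
  rw [star_adj z hz, star_adj z hz]
  by_cases huz : u = z <;> by_cases hvz : v = z
  · subst u; subst v
    rw [h0] at hu hv
    have h1 : u' = z := (Option.some.inj hu).symm
    have h2 : v' = z := (Option.some.inj hv).symm
    subst u'; subst v'; simp
  · subst u
    rw [h0] at hu
    have h1 : u' = z := (Option.some.inj hu).symm
    subst u'
    have hv' := hne v v' hvz hv
    constructor
    · intro _; exact ⟨fun h => hv' h.symm, Or.inl rfl⟩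
    · intro _; exact ⟨fun h => hvz h.symm, Or.inl rfl⟩
  · subst v
    rw [h0] at hv
    have h1 : v' = z := (Option.some.inj hv).symm
    subst v'
    have hu' := hne u u' huz hu
    constructor
    · intro _; exact ⟨hu', Or.inr rfl⟩
    · intro _; exact ⟨huz, Or.inr rfl⟩
  · have hu' := hne u u' huz hu
    have hv' := hne v v' hvz hv
    constructor
    · rintro ⟨_, h | h⟩ <;> [exact absurd h huz; exact absurd h hvz]
    · rintro ⟨_, h | h⟩ <;> [exact absurd h hu'; exact absurd h hv']

lemma strong_of_collapse {n : ℕ} (z : Fin n) (hz : (z : ℕ) = 0) (α : PTrans (Fin n)) (c : Fin n)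
    (h0 : α z = some c) (hc : c ≠ z)
    (hall : ∀ i w, i ≠ z → α i = some w → w = z) :
    IsPsEnd (starGraph n) α := by
  intro u v u' v' hu hv
  rw [star_adj z hz, star_adj z hz]
  by_cases huz : u = z <;> by_cases hvz : v = z
  · subst u; subst v
    rw [h0] at hu hv
    have h1 : u' = c := (Option.some.inj hu).symm
    have h2 : v' = c := (Option.some.inj hv).symm
    subst u'; subst v'; simp
  · subst u
    rw [h0] at hu
    have h1 : u' = c := (Option.some.inj hu).symm
    subst u'
    have h2 := hall v v' hvz hv
    subst v'
    constructor
    · intro _; exact ⟨hc, Or.inr rfl⟩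
    · intro _; exact ⟨fun h => hvz h.symm, Or.inl rfl⟩
  · subst v
    rw [h0] at hv
    have h1 : v' = c := (Option.some.inj hv).symm
    subst v'
    have h2 := hall u u' huz hu
    subst u'
    constructor
    · intro _; exact ⟨fun h => hc h.symm, Or.inl rfl⟩
    · intro _; exact ⟨huz, Or.inr rfl⟩
  · have h1 := hall u u' huz hu
    have h2 := hall v v' hvz hv
    subst u'; subst v'
    constructor
    · rintro ⟨_, h | h⟩ <;> [exact absurd h huz; exact absurd h hvz]
    · rintro ⟨h, _⟩; exact absurd rfl h

lemma center_none {n : ℕ} (z : Fin n) (hz : (z : ℕ) = 0) (γ : PTrans (Fin n))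
    (hpe : IsPEnd (starGraph n) γ) (hnps : ¬ IsPsEnd (starGraph n) γ) :
    γ z = none := by
  by_contra h
  obtain ⟨c, hc⟩ := Option.ne_none_iff_exists'.mp h
  by_cases hcz : c = z
  · subst c
    refine hnps (strong_of_center z hz γ hc ?_)
    intro i w hi hiw
    have hadj : (starGraph n).Adj z i := by
      rw [star_adj z hz]; exact ⟨fun h => hi h.symm, Or.inl rfl⟩
    have h2 := hpe z i z w hc hiw hadj
    rw [star_adj z hz] at h2
    exact fun hw => h2.1 hw.symm
  · refine hnps (strong_of_collapse z hz γ c hc hcz ?_)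
    intro i w hi hiw
    have hadj : (starGraph n).Adj z i := by
      rw [star_adj z hz]; exact ⟨fun h => hi h.symm, Or.inl rfl⟩
    have h2 := hpe z i c w hc hiw hadj
    rw [star_adj z hz] at h2
    rcases h2.2 with h | h
    · exact absurd h hcz
    · exact h

def phiM {n : ℕ} (z : Fin n) (e : Fin n ≃ Fin n) (α : PTrans (Fin n)) : PTrans (Fin n) :=
  fun i => if i = z then none else (α i).map e

def psiM {n : ℕ} (z : Fin n) (e : Fin n ≃ Fin n) (γ : PTrans (Fin n)) : PTrans (Fin n) :=
  fun i => if i = z then some z else (γ i).map e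

lemma bij_ncard {X Y : Type*} (B : Set X) (C : Set Y) (f : X → Y) (g : Y → X)
    (hf : ∀ a ∈ B, f a ∈ C) (hg : ∀ b ∈ C, g b ∈ B)
    (hgf : ∀ a ∈ B, g (f a) = a) (hfg : ∀ b ∈ C, f (g b) = b) :
    B.ncard = C.ncard := by
  have hbij : Set.BijOn f B C := Set.InvOn.bijOn ⟨hgf, hfg⟩ hf hg
  rw [← hbij.image_eq, Set.ncard_image_of_injOn hbij.injOn]

theorem stmt15 (n k : ℕ) (hn : 3 ≤ n) (hk1 : 1 ≤ k) (hk2 : k ≤ n - 1) :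
    Set.ncard {α : PTrans (Fin n) | IsPsEnd (starGraph n) α ∧
        (∀ j : Fin n, (j : ℕ) ≤ k → j ∈ pim α) ∧
        α ⟨0, by omega⟩ = some ⟨0, by omega⟩ ∧ 3 ≤ (pim α).ncard} =
    Set.ncard {α : PTrans (Fin n) | IsPEnd (starGraph n) α ∧ ¬ IsPsEnd (starGraph n) α ∧
        k = sInf {m : ℕ | 1 ≤ m ∧ m ≤ n - 1 ∧ ∀ j ∈ pim α, (j : ℕ) ≠ m}} := by
  classical
  have h0n : 0 < n := by omega
  have hkn : k < n := by omega
  set z : Fin n := ⟨0, h0n⟩ with hzdef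
  set k' : Fin n := ⟨k, hkn⟩ with hk'def
  have hzv : (z : ℕ) = 0 := rfl
  have hkv : (k' : ℕ) = k := rfl
  have hzk' : z ≠ k' := by
    intro h
    rw [Fin.ext_iff, hzv, hkv] at h
    omega
  set e : Fin n ≃ Fin n := Equiv.swap z k' with hedef
  have he_z : e z = k' := Equiv.swap_apply_left z k'
  have he_k : e k' = z := Equiv.swap_apply_right z k'
  have he_other : ∀ w : Fin n, w ≠ z → w ≠ k' → e w = w :=
    fun w h1 h2 => Equiv.swap_apply_of_ne_of_ne h1 h2
  have he_inv : ∀ w : Fin n, e (e w) = w := fun w => Equiv.swap_apply_self z k' w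
  apply bij_ncard _ _ (phiM z e) (psiM z e)
  -- MapsTo forward: B → C
  · rintro α ⟨hs, him, h0, hcard⟩
    have h0' : α z = some z := h0
    have hB2 : ∀ i w, i ≠ z → α i = some w → w ≠ z := by
      intro i w hi hiw
      have h2 := hs z i z w h0' hiw
      rw [star_adj z hzv, star_adj z hzv] at h2
      have h := h2.mp ⟨fun h => hi h.symm, Or.inl rfl⟩
      exact fun hw => h.1 hw.symm
    refine ⟨?_, ?_, ?_⟩
    -- IsPEnd
    · intro u v u' v' hu hv hadj
      rw [star_adj z hzv] at hadj
      rcases hadj.2 with h | h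
      · subst u; simp [phiM] at hu
      · subst v; simp [phiM] at hv
    -- not IsPsEnd
    · intro hps
      obtain ⟨i, hi⟩ : k' ∈ pim α := him k' (le_of_eq hkv)
      have hiz : i ≠ z := by
        intro h; subst h; rw [h0'] at hi
        exact hzk' (Option.some.inj hi)
      obtain ⟨w, hwim, hwz, hwk⟩ : ∃ w ∈ pim α, w ≠ z ∧ w ≠ k' := by
        by_contra hcon
        push_neg at hcon
        have hsub : pim α ⊆ {z, k'} := by
          intro x hx
          by_cases h1 : x = z
          · exact Or.inl h1
          · exact Or.inr (hcon x hx h1)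
        have := Set.ncard_le_ncard hsub (Set.toFinite _)
        rw [Set.ncard_pair hzk'] at this
        omega
      obtain ⟨j, hj⟩ := hwim
      have hjz : j ≠ z := by
        intro h; subst h; rw [h0'] at hj
        exact hwz (Option.some.inj hj).symm
      have hfi : phiM z e α i = some z := by
        simp only [phiM, if_neg hiz, hi, Option.map_some, he_k]
      have hfj : phiM z e α j = some w := by
        simp only [phiM, if_neg hjz, hj, Option.map_some, he_other w hwz hwk]
      have h2 := hps i j z w hfi hfj
      rw [star_adj z hzv, star_adj z hzv] at h2
      have h := h2.mpr ⟨fun h => hwz h.symm, Or.inl rfl⟩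
      rcases h.2 with h | h
      · exact hiz h
      · exact hjz h
    -- sInf
    · have hkS : k ∈ {m : ℕ | 1 ≤ m ∧ m ≤ n - 1 ∧
          ∀ j ∈ pim (phiM z e α), (j : ℕ) ≠ m} := by
        refine ⟨hk1, hk2, ?_⟩
        intro j hj
        obtain ⟨i, hi⟩ := hj
        by_cases hiz : i = z
        · subst hiz; simp [phiM] at hi
        · simp only [phiM, if_neg hiz] at hi
          obtain ⟨w, hw, hew⟩ := Option.map_eq_some_iff.mp hi
          have hwz := hB2 i w hiz hw
          by_cases hwk : w = k'
          · subst hwk; rw [he_k] at hew; subst hew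
            rw [hzv]; omega
          · rw [he_other w hwz hwk] at hew; subst hew
            intro hc
            exact hwk (Fin.ext (hc.trans hkv.symm))
      have h5 := Nat.sInf_mem ⟨k, hkS⟩
      have h6 := Nat.sInf_le hkS
      set m := sInf {m : ℕ | 1 ≤ m ∧ m ≤ n - 1 ∧
          ∀ j ∈ pim (phiM z e α), (j : ℕ) ≠ m}
      obtain ⟨hm1, hm2, hm3⟩ := h5
      by_contra hne
      have hmk : m < k := lt_of_le_of_ne h6 (fun h => hne h.symm)
      have hmn : m < n := by omega
      obtain ⟨i, hi⟩ : (⟨m, hmn⟩ : Fin n) ∈ pim α := him ⟨m, hmn⟩ (le_of_lt hmk)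
      have hmz : (⟨m, hmn⟩ : Fin n) ≠ z := by
        intro h; rw [hzdef, Fin.mk.injEq] at h; omega
      have hmk' : (⟨m, hmn⟩ : Fin n) ≠ k' := by
        intro h; rw [hk'def, Fin.mk.injEq] at h; omega
      refine hm3 ⟨m, hmn⟩ ⟨i, ?_⟩ rfl
      have hiz : i ≠ z := by
        intro h; subst h; rw [h0'] at hi
        exact hmz (Option.some.inj hi).symm
      simp only [phiM, if_neg hiz, hi, Option.map_some, he_other _ hmz hmk']
  -- MapsTo backward: C → B
  · rintro γ ⟨hpe, hnps, hinf⟩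
    have hγz : γ z = none := center_none z hzv γ hpe hnps
    have hsplit : z ∈ pim γ ∧ ∃ w ∈ pim γ, w ≠ z := by
      simp only [IsPsEnd, not_forall] at hnps
      obtain ⟨u, v, u', v', hu, hv, hni⟩ := hnps
      have huz : u ≠ z := fun h => by subst h; rw [hγz] at hu; cases hu
      have hvz : v ≠ z := fun h => by subst h; rw [hγz] at hv; cases hv
      have hA : ¬ (starGraph n).Adj u v := by
        rw [star_adj z hzv]
        rintro ⟨_, h | h⟩ <;> [exact huz h; exact hvz h]
      have hB : (starGraph n).Adj u' v' := by
        by_contra hB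
        exact hni (iff_of_false hA hB)
      rw [star_adj z hzv] at hB
      rcases hB.2 with h | h
      · subst h
        exact ⟨⟨u, hu⟩, ⟨v', ⟨v, hv⟩, fun hc => hB.1 hc.symm⟩⟩
      · subst h
        exact ⟨⟨v, hv⟩, ⟨u', ⟨u, hu⟩, hB.1⟩⟩
    obtain ⟨hzin, w₀, hw₀in, hw₀z⟩ := hsplit
    have hSne : {m : ℕ | 1 ≤ m ∧ m ≤ n - 1 ∧ ∀ j ∈ pim γ, (j : ℕ) ≠ m}.Nonempty := by
      by_contra h
      rw [Set.not_nonempty_iff_eq_empty] at h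
      rw [h, Nat.sInf_empty] at hinf
      omega
    have hkS : ∀ j ∈ pim γ, (j : ℕ) ≠ k := by
      have h5 := Nat.sInf_mem hSne
      rw [← hinf] at h5
      exact h5.2.2
    have hknotim : k' ∉ pim γ := fun h => hkS k' h hkv
    have hsmall : ∀ m : ℕ, 1 ≤ m → m < k → ∃ j ∈ pim γ, (j : ℕ) = m := by
      intro m hm1 hmk
      by_contra h
      push_neg at h
      have hmS : m ∈ {m : ℕ | 1 ≤ m ∧ m ≤ n - 1 ∧ ∀ j ∈ pim γ, (j : ℕ) ≠ m} :=
        ⟨hm1, by omega, h⟩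
      have := Nat.sInf_le hmS
      omega
    have hval : ∀ i w, i ≠ z → γ i = some w → w ≠ k' := by
      intro i w hi hiw hwk
      exact hknotim (hwk ▸ ⟨i, hiw⟩)
    refine ⟨?_, ?_, ?_, ?_⟩
    -- IsPsEnd
    · apply strong_of_center z hzv
      · simp [psiM]
      · intro i w hi hiw
        simp only [psiM, if_neg hi] at hiw
        obtain ⟨x, hx, hex⟩ := Option.map_eq_some_iff.mp hiw
        intro hwz
        have hxk : x = k' := by
          have h2 : e x = e k' := by rw [hex, hwz, he_k]
          exact e.injective h2
        exact hval i x hi hx hxk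
    -- image contains 0..k
    · intro j hj
      by_cases hjz : j = z
      · exact ⟨z, by simp [psiM, hjz]⟩
      · by_cases hjk : j = k'
        · obtain ⟨i, hi⟩ := hzin
          have hiz : i ≠ z := fun h => by subst h; rw [hγz] at hi; cases hi
          refine ⟨i, ?_⟩
          simp only [psiM, if_neg hiz, hi, Option.map_some, he_z]
          rw [hjk]
        · have hj1 : 1 ≤ (j : ℕ) := by
            rcases Nat.eq_zero_or_pos (j : ℕ) with h | h
            · exact absurd (Fin.ext (h.trans hzv.symm)) hjz
            · exact h
          have hjk' : (j : ℕ) < k :=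
            lt_of_le_of_ne hj (fun h => hjk (Fin.ext (h.trans hkv.symm)))
          obtain ⟨j', hj'in, hj'val⟩ := hsmall (j : ℕ) hj1 hjk'
          have hjj : j' = j := Fin.ext hj'val
          subst hjj
          obtain ⟨i, hi⟩ := hj'in
          have hiz : i ≠ z := fun h => by subst h; rw [hγz] at hi; cases hi
          refine ⟨i, ?_⟩
          simp only [psiM, if_neg hiz, hi, Option.map_some, he_other j' hjz hjk]
    -- α z = some z
    · simp [psiM]
    -- ncard ≥ 3
    · have hw₀k : w₀ ≠ k' := fun h => hknotim (h ▸ hw₀in)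
      obtain ⟨i₀, hi₀⟩ := hzin
      have hi₀z : i₀ ≠ z := fun h => by subst h; rw [hγz] at hi₀; cases hi₀
      obtain ⟨j₀, hj₀⟩ := hw₀in
      have hj₀z : j₀ ≠ z := fun h => by subst h; rw [hγz] at hj₀; cases hj₀
      have hsub : ({z, k', w₀} : Set (Fin n)) ⊆
          pim (psiM z e γ) := by
        rintro x (rfl | rfl | rfl)
        · exact ⟨z, by simp [psiM]⟩
        · exact ⟨i₀, by simp only [psiM, if_neg hi₀z, hi₀, Option.map_some, he_z]⟩
        · exact ⟨j₀, by simp only [psiM, if_neg hj₀z, hj₀, Option.map_some, he_other _ hw₀z hw₀k]⟩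
      have h3 : ({z, k', w₀} : Set (Fin n)).ncard = 3 := by
        have hzmem : z ∉ ({k', w₀} : Set (Fin n)) := by
          simp only [Set.mem_insert_iff, Set.mem_singleton_iff]
          push_neg
          exact ⟨hzk', Ne.symm hw₀z⟩
        rw [Set.ncard_insert_of_notMem hzmem (Set.toFinite _),
          Set.ncard_pair (Ne.symm hw₀k)]
      have := Set.ncard_le_ncard hsub (Set.toFinite _)
      omega
  -- left inverse
  · rintro α ⟨_, _, h0, _⟩
    have h0' : α z = some z := h0
    funext i
    by_cases hiz : i = z
    · subst i
      simp only [psiM, phiM, if_pos]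
      exact h0'.symm
    · simp only [psiM, phiM, if_neg hiz]
      cases hαi : α i with
      | none => simp
      | some w => simp [he_inv]
  -- right inverse
  · rintro γ ⟨hpe, hnps, hinf⟩
    have hγz : γ z = none := center_none z hzv γ hpe hnps
    funext i
    by_cases hiz : i = z
    · subst i
      simp only [psiM, phiM, if_pos]
      exact hγz.symm
    · simp only [psiM, phiM, if_neg hiz]
      cases hγi : γ i with
      | none => simp
      | some w => simp [he_inv]
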